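/- In the model M2, for every formula φ of the language Φ (with single propositional variable p and single name Ann) that does not use the modality R, the truth set [φ] belongs to the family {[p], [⊥], [¬p], [⊤]}. -/

import Mathlib

/-- Formulas of the language Φ: φ ::= p | ¬φ | φ∨φ | @ₙφ | Rₙφ | Dₙφ,
where `P` is the type of propositional variables and `N` the type of names. -/
inductive Formula (P N : Type) : Type
  | var : P → Formula P N
  | neg : Formula P N → Formula P N
  | disj : Formula P N → Formula P N → Formula P N
  | at_ : N → Formula P N → Formula P N
  | re : N → Formula P N → Formula P N
  | de : N → Formula P N → Formula P N

/-- An epistemic model with extensions. -/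
structure Model (P N : Type) where
  W : Type
  A : Type
  sim : A → W → W → Prop
  sim_equiv : ∀ a, Equivalence (sim a)
  ext : W → N → A
  val : P → Set (W × A)

/-- The satisfaction relation `w, a ⊨ φ`. -/
def Model.sat {P N : Type} (M : Model P N) : Formula P N → M.W → M.A → Prop
  | .var p, w, a => (w, a) ∈ M.val p
  | .neg φ, w, a => ¬ M.sat φ w a
  | .disj φ ψ, w, a => M.sat φ w a ∨ M.sat ψ w a
  | .at_ n φ, w, _ => M.sat φ w (M.ext w n)
  | .re n φ, w, a => ∀ u, M.sim a w u → M.sat φ u (M.ext w n)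
  | .de n φ, w, a => ∀ u, M.sim a w u → M.sat φ u (M.ext u n)

/-- The truth set ⟦φ⟧ of a formula. -/
def Model.truthSet {P N : Type} (M : Model P N) (φ : Formula P N) : Set (M.W × M.A) :=
  {x | M.sat φ x.1 x.2}

/-- The model M2: worlds w=0, u=1; agents a=0, b=1; agent a cannot
distinguish the worlds, agent b can; Ann refers to a in w and b in u;
π(p) = {(w,a),(u,b)}. -/
def M2 : Model Unit Unit where
  W := Fin 2
  A := Fin 2
  sim := fun x s t => x = 0 ∨ s = t
  sim_equiv := fun x =>
    ⟨fun _ => Or.inr rfl, fun h => h.imp id Eq.symm,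
     fun h₁ h₂ => by rcases h₁ with h | h <;> rcases h₂ with h' | h' <;> simp_all⟩
  ext := fun w _ => w
  val := fun _ => {((0 : Fin 2), (0 : Fin 2)), (1, 1)}

/-- The family of truth sets {⟦p⟧, ⟦⊥⟧, ⟦¬p⟧, ⟦⊤⟧} in M2 (⟦⊥⟧ = ∅, ⟦⊤⟧ = W×A). -/
def Fam2 : Set (Set (M2.W × M2.A)) :=
  {M2.truthSet (.var ()), ∅, M2.truthSet (.neg (.var ())), Set.univ}

/-- A formula does not use the modality R. -/
def Formula.noRe {P N : Type} : Formula P N → Prop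
  | .var _ => True
  | .neg φ => φ.noRe
  | .disj φ ψ => φ.noRe ∧ ψ.noRe
  | .at_ _ φ => φ.noRe
  | .re _ _ => False
  | .de _ φ => φ.noRe

instance : Fintype M2.W := inferInstanceAs (Fintype (Fin 2))
instance : Fintype M2.A := inferInstanceAs (Fintype (Fin 2))
instance : DecidableEq M2.W := inferInstanceAs (DecidableEq (Fin 2))
instance : DecidableEq M2.A := inferInstanceAs (DecidableEq (Fin 2))

/-- The diagonal set, which coincides with ⟦p⟧ in M2. -/
def Ap : Set (Fin 2 × Fin 2) := {x | x.1 = x.2}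

/-- The off-diagonal set, which coincides with ⟦¬p⟧ in M2. -/
def An : Set (Fin 2 × Fin 2) := {x | x.1 ≠ x.2}

lemma cAp : Apᶜ = An := by ext x; simp [Ap, An]
lemma cAn : Anᶜ = Ap := by ext x; simp [Ap, An]
lemma uApAn : Ap ∪ An = Set.univ := by ext x; simp [Ap, An]; exact em _
lemma uAnAp : An ∪ Ap = Set.univ := by rw [Set.union_comm]; exact uApAn

lemma aAp : {x : Fin 2 × Fin 2 | (x.1, x.1) ∈ Ap} = Set.univ := by ext x; simp [Ap]
lemma aAn : {x : Fin 2 × Fin 2 | (x.1, x.1) ∈ An} = ∅ := by ext x; simp [An]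
lemma aE : {x : Fin 2 × Fin 2 | (x.1, x.1) ∈ (∅ : Set (Fin 2 × Fin 2))} = ∅ := by
  ext x; simp
lemma aU : {x : Fin 2 × Fin 2 | (x.1, x.1) ∈ (Set.univ : Set (Fin 2 × Fin 2))} =
    Set.univ := by ext x; simp

lemma dAp : {x : Fin 2 × Fin 2 | ∀ u : Fin 2, (x.2 = 0 ∨ x.1 = u) → (u, u) ∈ Ap} =
    Set.univ := by ext x; simp [Ap]
lemma dAn : {x : Fin 2 × Fin 2 | ∀ u : Fin 2, (x.2 = 0 ∨ x.1 = u) → (u, u) ∈ An} =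
    ∅ := by
  ext ⟨w, a⟩
  simp only [Set.mem_setOf_eq, Set.mem_empty_iff_false, iff_false, not_forall]
  exact ⟨w, Or.inr rfl, by simp [An]⟩
lemma dE : {x : Fin 2 × Fin 2 | ∀ u : Fin 2, (x.2 = 0 ∨ x.1 = u) →
    (u, u) ∈ (∅ : Set (Fin 2 × Fin 2))} = ∅ := by
  ext ⟨w, a⟩
  simp only [Set.mem_setOf_eq, Set.mem_empty_iff_false, iff_false, not_forall]
  exact ⟨w, Or.inr rfl, fun h => h⟩
lemma dU : {x : Fin 2 × Fin 2 | ∀ u : Fin 2, (x.2 = 0 ∨ x.1 = u) →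
    (u, u) ∈ (Set.univ : Set (Fin 2 × Fin 2))} = Set.univ := by ext x; simp

/-- In M2, for every formula φ not using the modality R,
⟦φ⟧ ∈ {⟦p⟧, ⟦⊥⟧, ⟦¬p⟧, ⟦⊤⟧}. -/
theorem noRe_truthSet_in_Fam2 (φ : Formula Unit Unit) (h : φ.noRe) :
    M2.truthSet φ ∈ Fam2 := by
  have hP : M2.truthSet (.var ()) = Ap := by
    ext ⟨w, a⟩
    show ((w : Fin 2), (a : Fin 2)) ∈ ({(0, 0), (1, 1)} : Set (Fin 2 × Fin 2)) ↔ ((w : Fin 2), (a : Fin 2)) ∈ Ap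
    fin_cases w <;> fin_cases a <;> simp [M2, Ap]
  have hN : M2.truthSet (.neg (.var ())) = An := by
    ext ⟨w, a⟩
    show ¬ (((w : Fin 2), (a : Fin 2)) ∈ ({(0, 0), (1, 1)} : Set (Fin 2 × Fin 2))) ↔ ((w : Fin 2), (a : Fin 2)) ∈ An
    fin_cases w <;> fin_cases a <;> simp [M2, An]
  have key : M2.truthSet φ = Ap ∨
      M2.truthSet φ = (∅ : Set (Fin 2 × Fin 2)) ∨
      M2.truthSet φ = An ∨
      M2.truthSet φ = (Set.univ : Set (Fin 2 × Fin 2)) := by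
    induction φ with
    | var q => exact Or.inl hP
    | neg ψ ih =>
      have hT : M2.truthSet (.neg ψ) = (M2.truthSet ψ : Set (Fin 2 × Fin 2))ᶜ := rfl
      rcases ih h with h1 | h1 | h1 | h1 <;> rw [hT, h1]
      · exact Or.inr (Or.inr (Or.inl cAp))
      · exact Or.inr (Or.inr (Or.inr Set.compl_empty))
      · exact Or.inl cAn
      · exact Or.inr (Or.inl Set.compl_univ)
    | disj ψ χ ihψ ihχ =>
      have hT : M2.truthSet (.disj ψ χ) =
          (M2.truthSet ψ : Set (Fin 2 × Fin 2)) ∪ M2.truthSet χ := rfl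
      rcases ihψ h.1 with h1 | h1 | h1 | h1 <;> rcases ihχ h.2 with h2 | h2 | h2 | h2 <;>
        rw [hT, h1, h2] <;>
        first
        | exact Or.inl (Set.union_self _)
        | exact Or.inl (Set.union_empty _)
        | exact Or.inl (Set.empty_union _)
        | exact Or.inr (Or.inl (Set.union_self _))
        | exact Or.inr (Or.inr (Or.inl (Set.union_self _)))
        | exact Or.inr (Or.inr (Or.inl (Set.union_empty _)))
        | exact Or.inr (Or.inr (Or.inl (Set.empty_union _)))
        | exact Or.inr (Or.inr (Or.inr uApAn))
        | exact Or.inr (Or.inr (Or.inr uAnAp))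
        | exact Or.inr (Or.inr (Or.inr (Set.union_univ _)))
        | exact Or.inr (Or.inr (Or.inr (Set.univ_union _)))
    | at_ n ψ ih =>
      have hT : M2.truthSet (.at_ n ψ) =
          {x : Fin 2 × Fin 2 | (x.1, x.1) ∈ (M2.truthSet ψ : Set (Fin 2 × Fin 2))} := rfl
      rcases ih h with h1 | h1 | h1 | h1 <;> rw [hT] <;> simp only [h1]
      · exact Or.inr (Or.inr (Or.inr aAp))
      · exact Or.inr (Or.inl aE)
      · exact Or.inr (Or.inl aAn)
      · exact Or.inr (Or.inr (Or.inr aU))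
    | re n ψ ih => exact absurd h (by simp [Formula.noRe])
    | de n ψ ih =>
      have hT : M2.truthSet (.de n ψ) =
          {x : Fin 2 × Fin 2 | ∀ u : Fin 2, (x.2 = 0 ∨ x.1 = u) →
            (u, u) ∈ (M2.truthSet ψ : Set (Fin 2 × Fin 2))} := rfl
      rcases ih h with h1 | h1 | h1 | h1 <;> rw [hT] <;> simp only [h1]
      · exact Or.inr (Or.inr (Or.inr dAp))
      · exact Or.inr (Or.inl dE)
      · exact Or.inr (Or.inl dAn)
      · exact Or.inr (Or.inr (Or.inr dU))
  rcases key with h1 | h1 | h1 | h1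
  · exact Or.inl (h1.trans hP.symm)
  · exact Or.inr (Or.inl h1)
  · exact Or.inr (Or.inr (Or.inl (h1.trans hN.symm)))
  · exact Or.inr (Or.inr (Or.inr h1))
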